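/- Let G be an almost simple group with socle S, let K be a permutation group with G* ≤ K ≤ Sym(G), let L be the minimal block of K and K_𝔏 the subgroup of all elements of K mapping each right coset of L to itself. Let X and X' be right cosets of L such that some element of K_𝔏 fixes one of X, X' pointwise but does not fix the other pointwise (i.e., X and X' are not equivalent). Then K_𝔏 acts transitively on X × X': for all a, c ∈ X and all b, d ∈ X' there exists k ∈ K_𝔏 with a^k = c and b^k = d. -/

import Mathlib

/-- The subgroup of `Sym(A)` consisting of the right translations `x ↦ x * g`. -/
def rightMuls (A : Type*) [Group A] : Subgroup (Equiv.Perm A) :=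
  (MulAction.toPermHom Aᵐᵒᵖ A).range

/-- The holomorph of `A`, i.e. the normalizer in `Sym(A)` of the group of right
translations. -/
def Hol (A : Type*) [Group A] : Subgroup (Equiv.Perm A) :=
  Subgroup.normalizer ((rightMuls A : Set (Equiv.Perm A)))

/-- `D(2,A)`: the subgroup of `Sym(A)` generated by `Hol(A)` and the inversion
permutation `g ↦ g⁻¹`. -/
def D2 (A : Type*) [Group A] : Subgroup (Equiv.Perm A) :=
  Hol A ⊔ Subgroup.closure {Equiv.inv A}

/-- The homomorphism `H × H →* Sym(A)` sending `(h₁, h₂)` to `x ↦ h₁ * x * h₂⁻¹`. -/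
def biTransHom {A : Type*} [Group A] (H : Subgroup A) : H × H →* Equiv.Perm A where
  toFun p := (Equiv.mulLeft (p.1 : A)).trans (Equiv.mulRight ((p.2 : A)⁻¹))
  map_one' := by ext x; simp
  map_mul' p q := by ext x; simp [mul_assoc]

/-- `H*`: the subgroup of `Sym(A)` of all permutations `x ↦ h₁ * x * h₂` with
`h₁, h₂ ∈ H`. -/
def starGroup {A : Type*} [Group A] (H : Subgroup A) : Subgroup (Equiv.Perm A) :=
  (biTransHom H).range

/-- The automorphism group of the Cayley graph `Cay(A, X)`: all permutations `f`
of `A` such that `h * g⁻¹ ∈ X ↔ f h * (f g)⁻¹ ∈ X` for all `g, h`. -/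
def cayAut {A : Type*} [Group A] (X : Set A) : Subgroup (Equiv.Perm A) where
  carrier := {f : Equiv.Perm A | ∀ g h : A, h * g⁻¹ ∈ X ↔ f h * (f g)⁻¹ ∈ X}
  one_mem' := by intro g h; simp
  mul_mem' := by
    intro a b ha hb g h
    simpa [Equiv.Perm.mul_apply] using (hb g h).trans (ha (b g) (b h))
  inv_mem' := by
    intro a ha g h
    simpa using (ha (a⁻¹ g) (a⁻¹ h)).symm

/-- A `K`-block: a subset `B` such that every `k ∈ K` either fixes `B` setwise or
moves it to a disjoint set. -/
def IsBlock {A : Type*} [Group A] (K : Subgroup (Equiv.Perm A)) (B : Set A) : Prop :=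
  ∀ k ∈ K, (k : Equiv.Perm A) '' B = B ∨ ((k : Equiv.Perm A) '' B) ∩ B = ∅

/-- The minimal block of `K`: the intersection of all `K`-blocks of size at least 2
containing the identity. -/
def minBlock {A : Type*} [Group A] (K : Subgroup (Equiv.Perm A)) : Set A :=
  ⋂₀ {B : Set A | IsBlock K B ∧ (1 : A) ∈ B ∧ 2 ≤ B.ncard}

/-- The right coset `L * g`. -/
def rcoset {A : Type*} [Group A] (L : Subgroup A) (g : A) : Set A :=
  {x : A | x * g⁻¹ ∈ L}

/-- `K_𝔏`: the subgroup of all elements of `K` mapping each right coset of `L` to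
itself. -/
def stabCosets {A : Type*} [Group A] (K : Subgroup (Equiv.Perm A)) (L : Subgroup A) :
    Subgroup (Equiv.Perm A) where
  carrier := {f : Equiv.Perm A | f ∈ K ∧ ∀ x : A, f x * x⁻¹ ∈ L}
  one_mem' := ⟨K.one_mem, fun x => by simpa using L.one_mem⟩
  mul_mem' := by
    rintro a b ⟨haK, ha⟩ ⟨hbK, hb⟩
    refine ⟨K.mul_mem haK hbK, fun x => ?_⟩
    have := L.mul_mem (ha (b x)) (hb x)
    simpa [Equiv.Perm.mul_apply, mul_assoc] using this
  inv_mem' := by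
    rintro a ⟨haK, ha⟩
    refine ⟨K.inv_mem haK, fun x => ?_⟩
    have := L.inv_mem (ha (a⁻¹ x))
    simpa [mul_inv_rev] using this

/-- Two subsets `X`, `X'` are equivalent (w.r.t. `K` and `L`) if every element of
`K_𝔏` fixes `X` pointwise iff it fixes `X'` pointwise. -/
def cosetEquiv {A : Type*} [Group A] (K : Subgroup (Equiv.Perm A)) (L : Subgroup A)
    (X X' : Set A) : Prop :=
  ∀ f ∈ stabCosets K L,
    ((∀ x ∈ X, (f : Equiv.Perm A) x = x) ↔ (∀ x ∈ X', (f : Equiv.Perm A) x = x))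

/-- The union `U` of the right cosets of `L` that are equivalent to `L`. -/
def Uset {A : Type*} [Group A] (K : Subgroup (Equiv.Perm A)) (L : Subgroup A) : Set A :=
  {x : A | cosetEquiv K L (L : Set A) (rcoset L x)}

/-- A permutation group `K` is 2-closed if it contains every permutation `f` such
that every pair of points can be moved as by `f` by some element of `K`. -/
def Is2Closed {A : Type*} [Group A] (K : Subgroup (Equiv.Perm A)) : Prop :=
  ∀ f : Equiv.Perm A, (∀ a b : A, ∃ k ∈ K, (k : Equiv.Perm A) a = f a ∧ k b = f b) → f ∈ K

theorem Equiv.Perm.apply_inv_self {α : Type*} (f : Equiv.Perm α) (x : α) : f (f⁻¹ x) = x :=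
  Equiv.apply_symm_apply f x

theorem Equiv.Perm.inv_apply_self {α : Type*} (f : Equiv.Perm α) (x : α) : f⁻¹ (f x) = x :=
  Equiv.symm_apply_apply f x

section Aux

variable {G : Type*} [Group G] [Fintype G]

/-- Helper permutation `x ↦ h₁ * x * h₂⁻¹`. -/
def bt (h₁ h₂ : G) : Equiv.Perm G := (Equiv.mulLeft h₁).trans (Equiv.mulRight h₂⁻¹)

lemma bt_apply (h₁ h₂ x : G) : bt h₁ h₂ x = h₁ * x * h₂⁻¹ := rfl

lemma bt_mem {K : Subgroup (Equiv.Perm G)} (hGK : starGroup (⊤ : Subgroup G) ≤ K)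
    (h₁ h₂ : G) : bt h₁ h₂ ∈ K :=
  hGK ⟨(⟨h₁, Subgroup.mem_top _⟩, ⟨h₂, Subgroup.mem_top _⟩), rfl⟩

lemma perm_mem_image (k : Equiv.Perm G) (B : Set G) (x : G) : x ∈ k '' B ↔ k⁻¹ x ∈ B := by
  constructor
  · rintro ⟨y, hy, rfl⟩; simpa using hy
  · intro h; exact ⟨k⁻¹ x, h, by simp⟩

lemma perm_image_inv (k : Equiv.Perm G) (W : Set G) :
    k '' ((k⁻¹ : Equiv.Perm G) '' W) = W := by
  ext x
  constructor
  · rintro ⟨y, ⟨w, hw, rfl⟩, rfl⟩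
    rw [Equiv.Perm.apply_inv_self]; exact hw
  · intro hx
    refine ⟨(k⁻¹ : Equiv.Perm G) x, ⟨x, hx, rfl⟩, by simp⟩

lemma perm_inv_image (k : Equiv.Perm G) (W : Set G) :
    (k⁻¹ : Equiv.Perm G) '' (k '' W) = W := by
  have := perm_image_inv (k⁻¹) W
  simpa using this

/-- The family of blocks defining `minBlock`. -/
def Fam (K : Subgroup (Equiv.Perm G)) : Set (Set G) :=
  {B : Set G | IsBlock K B ∧ (1 : G) ∈ B ∧ 2 ≤ B.ncard}

lemma minBlock_eq (K : Subgroup (Equiv.Perm G)) : minBlock K = ⋂₀ Fam K := rfl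

lemma one_mem_minBlock (K : Subgroup (Equiv.Perm G)) : (1:G) ∈ minBlock K :=
  Set.mem_sInter.2 fun _ hB => hB.2.1

lemma isBlock_minBlock (K : Subgroup (Equiv.Perm G)) : IsBlock K (minBlock K) := by
  intro k hk
  by_cases hall : ∀ B ∈ Fam K, (k : Equiv.Perm G) '' B = B
  · left
    ext x
    rw [perm_mem_image]
    simp only [minBlock_eq, Set.mem_sInter]
    refine forall₂_congr fun B hB => ?_
    have h2 : k⁻¹ x ∈ B ↔ x ∈ (k : Equiv.Perm G) '' B := (perm_mem_image _ _ _).symm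
    rw [hall B hB] at h2
    exact h2
  · right
    push_neg at hall
    obtain ⟨B, hB, hne⟩ := hall
    have hd : (k : Equiv.Perm G) '' B ∩ B = ∅ := (hB.1 k hk).resolve_left hne
    rw [Set.eq_empty_iff_forall_notMem]
    rintro x ⟨hx1, hx2⟩
    have h1 : x ∈ (k : Equiv.Perm G) '' B := by
      obtain ⟨y, hy, rfl⟩ := hx1
      exact ⟨y, Set.mem_sInter.1 hy B hB, rfl⟩
    have h2 : x ∈ B := Set.mem_sInter.1 hx2 B hB
    have hmem : x ∈ (k : Equiv.Perm G) '' B ∩ B := ⟨h1, h2⟩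
    rw [hd] at hmem
    exact hmem

lemma isBlock_image {K : Subgroup (Equiv.Perm G)} {B : Set G} (hB : IsBlock K B)
    {k : Equiv.Perm G} (hk : k ∈ K) : IsBlock K (k '' B) := by
  intro k' hk'
  have hu : k⁻¹ * k' * k ∈ K := K.mul_mem (K.mul_mem (K.inv_mem hk) hk') hk
  have himg : (k' : Equiv.Perm G) '' (k '' B) = k '' ((k⁻¹ * k' * k) '' B) := by
    rw [Set.image_image, Set.image_image]
    congr 1
    funext x
    simp [Equiv.Perm.mul_apply]
  rcases hB _ hu with h | h
  · left; rw [himg, h]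
  · right
    rw [himg, ← Set.image_inter k.injective, h, Set.image_empty]

lemma translates_overlap {K : Subgroup (Equiv.Perm G)} {B : Set G} (hB : IsBlock K B)
    {k₁ k₂ : Equiv.Perm G} (hk₁ : k₁ ∈ K) (hk₂ : k₂ ∈ K)
    (hx : (k₁ '' B ∩ k₂ '' B).Nonempty) : k₁ '' B = k₂ '' B := by
  have himg : k₂ '' ((k₂⁻¹ * k₁) '' B) = k₁ '' B := by
    rw [Set.image_image]
    congr 1
    funext x
    simp [Equiv.Perm.mul_apply]
  rcases hB (k₂⁻¹ * k₁) (K.mul_mem (K.inv_mem hk₂) hk₁) with h | h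
  · rw [← himg, h]
  · exfalso
    obtain ⟨x, hx1, hx2⟩ := hx
    obtain ⟨b₁, hb₁, rfl⟩ := hx1
    obtain ⟨b₂, hb₂, he⟩ := hx2
    have hmem : (k₂⁻¹ * k₁) b₁ ∈ (k₂⁻¹ * k₁) '' B ∩ B := by
      refine ⟨⟨b₁, hb₁, rfl⟩, ?_⟩
      rw [Equiv.Perm.mul_apply, ← he, Equiv.Perm.inv_apply_self]
      exact hb₂
    rw [h] at hmem
    exact hmem

lemma fam_limage {K : Subgroup (Equiv.Perm G)} (hGK : starGroup (⊤ : Subgroup G) ≤ K)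
    {B : Set G} (hB : B ∈ Fam K) {b : G} (hb : b ∈ B) : bt b 1 '' B = B := by
  rcases hB.1 (bt b 1) (bt_mem hGK b 1) with h | h
  · exact h
  · exfalso
    have : b ∈ bt b 1 '' B ∩ B := ⟨⟨1, hB.2.1, by simp [bt_apply]⟩, hb⟩
    rw [h] at this
    exact this

lemma fam_mul {K : Subgroup (Equiv.Perm G)} (hGK : starGroup (⊤ : Subgroup G) ≤ K)
    {B : Set G} (hB : B ∈ Fam K) {b x : G} (hb : b ∈ B) (hx : x ∈ B) : b * x ∈ B := by
  have h := fam_limage hGK hB hb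
  have : b * x ∈ bt b 1 '' B := ⟨x, hx, by simp [bt_apply]⟩
  rwa [h] at this

lemma fam_inv {K : Subgroup (Equiv.Perm G)} (hGK : starGroup (⊤ : Subgroup G) ≤ K)
    {B : Set G} (hB : B ∈ Fam K) {b : G} (hb : b ∈ B) : b⁻¹ ∈ B := by
  have h := fam_limage hGK hB hb
  have h1 : (1:G) ∈ bt b 1 '' B := h.symm ▸ hB.2.1
  obtain ⟨x, hx, he⟩ := h1
  have hbx : b * x = 1 := by simpa [bt_apply] using he
  have : x = b⁻¹ := by rw [← inv_mul_cancel_left b x, hbx, mul_one]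
  rwa [← this]

lemma fam_conj {K : Subgroup (Equiv.Perm G)} (hGK : starGroup (⊤ : Subgroup G) ≤ K)
    {B : Set G} (hB : B ∈ Fam K) {x : G} (hx : x ∈ B) (g : G) : g * x * g⁻¹ ∈ B := by
  rcases hB.1 (bt g g) (bt_mem hGK g g) with h | h
  · have : g * x * g⁻¹ ∈ bt g g '' B := ⟨x, hx, by simp [bt_apply]⟩
    rwa [h] at this
  · exfalso
    have : (1:G) ∈ bt g g '' B ∩ B := ⟨⟨1, hB.2.1, by simp [bt_apply]⟩, hB.2.1⟩
    rw [h] at this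
    exact this

lemma simple_core {S : Subgroup G} (hSnormal : S.Normal) (hSsimple : IsSimpleGroup S)
    (hScent : ∀ g : G, (∀ s ∈ S, g * s = s * g) → g = 1)
    (M : Subgroup G) (hnorm : ∀ s ∈ S, ∀ m ∈ M, s * m * s⁻¹ ∈ M)
    (hnt : ∃ m ∈ M, m ≠ 1) : ∀ s ∈ S, s ∈ M := by
  have hCn : (M.subgroupOf S).Normal := by
    constructor
    intro n hn s
    have h1 : (s : G) * (n : G) * (s : G)⁻¹ ∈ M := hnorm s s.2 n hn
    simpa [Subgroup.mem_subgroupOf] using h1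
  rcases hSsimple.eq_bot_or_eq_top_of_normal (M.subgroupOf S) hCn with h | h
  · exfalso
    obtain ⟨m, hm, hm1⟩ := hnt
    apply hm1
    apply hScent
    intro s hs
    have h1 : m * s * m⁻¹ * s⁻¹ ∈ M := by
      have h2 : s * m⁻¹ * s⁻¹ ∈ M := hnorm s hs m⁻¹ (M.inv_mem hm)
      have h3 := M.mul_mem hm h2
      have e : m * (s * m⁻¹ * s⁻¹) = m * s * m⁻¹ * s⁻¹ := by group
      rwa [e] at h3
    have h2 : m * s * m⁻¹ * s⁻¹ ∈ S := S.mul_mem (hSnormal.conj_mem s hs m) (S.inv_mem hs)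
    have h4 : (⟨m * s * m⁻¹ * s⁻¹, h2⟩ : S) ∈ M.subgroupOf S := by
      simpa [Subgroup.mem_subgroupOf] using h1
    rw [h] at h4
    have e1 : m * s * m⁻¹ * s⁻¹ = 1 := by
      simpa [Subgroup.mem_bot] using h4
    have h3 : m * s * m⁻¹ = s := mul_inv_eq_one.mp e1
    simpa using congrArg (· * m) h3
  · intro s hs
    have h4 : (⟨s, hs⟩ : S) ∈ M.subgroupOf S := by rw [h]; trivial
    simpa [Subgroup.mem_subgroupOf] using h4

lemma fam_S {K : Subgroup (Equiv.Perm G)} (hGK : starGroup (⊤ : Subgroup G) ≤ K)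
    {S : Subgroup G} (hSnormal : S.Normal) (hSsimple : IsSimpleGroup S)
    (hScent : ∀ g : G, (∀ s ∈ S, g * s = s * g) → g = 1)
    {B : Set G} (hB : B ∈ Fam K) : ∀ s ∈ S, s ∈ B := by
  let N : Subgroup G :=
    { carrier := B
      one_mem' := hB.2.1
      mul_mem' := fun ha hb => fam_mul hGK hB ha hb
      inv_mem' := fun ha => fam_inv hGK hB ha }
  have hnt : ∃ m ∈ N, m ≠ 1 := by
    by_contra hcon
    push_neg at hcon
    have hsub : B ⊆ {1} := fun x hx => hcon x hx
    have h1 : B.ncard ≤ 1 := by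
      simpa using Set.ncard_le_ncard hsub (Set.finite_singleton 1)
    have h2 := hB.2.2
    omega
  exact simple_core hSnormal hSsimple hScent N (fun s _ m hm => fam_conj hGK hB hm s) hnt

end Aux

section Aux2

variable {G : Type*} [Group G] [Fintype G]

lemma mem_stab {K : Subgroup (Equiv.Perm G)} {L : Subgroup G} {f : Equiv.Perm G} :
    f ∈ stabCosets K L ↔ f ∈ K ∧ ∀ x : G, f x * x⁻¹ ∈ L := Iff.rfl

lemma mem_rcoset' {L : Subgroup G} {g x : G} : x ∈ rcoset L g ↔ x * g⁻¹ ∈ L := Iff.rfl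

lemma rcoset_eq {L : Subgroup G} {w z : G} (h : w * z⁻¹ ∈ L) : rcoset L w = rcoset L z := by
  ext x
  constructor
  · intro hx
    have h1 := L.mul_mem (mem_rcoset'.mp hx) h
    have e : x * w⁻¹ * (w * z⁻¹) = x * z⁻¹ := by group
    rw [e] at h1
    exact h1
  · intro hx
    have h1 := L.mul_mem (mem_rcoset'.mp hx) (L.inv_mem h)
    have e : x * z⁻¹ * (w * z⁻¹)⁻¹ = x * w⁻¹ := by group
    rw [e] at h1
    exact h1

lemma self_mem_rcoset (L : Subgroup G) (g : G) : g ∈ rcoset L g := by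
  have : g * g⁻¹ = 1 := by group
  rw [mem_rcoset', this]
  exact L.one_mem

lemma rcoset_div {L : Subgroup G} {g' y b : G} (hy : y ∈ rcoset L g') (hb : b ∈ rcoset L g') :
    y * b⁻¹ ∈ L := by
  have h1 := L.mul_mem (mem_rcoset'.mp hy) (L.inv_mem (mem_rcoset'.mp hb))
  have e : y * g'⁻¹ * (b * g'⁻¹)⁻¹ = y * b⁻¹ := by group
  rwa [e] at h1

lemma rcoset_eq_of_mem_both {L : Subgroup G} {w z x : G} (hw : x ∈ rcoset L w)
    (hz : x ∈ rcoset L z) : rcoset L w = rcoset L z := by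
  apply rcoset_eq
  have h1 := L.mul_mem (L.inv_mem (mem_rcoset'.mp hw)) (mem_rcoset'.mp hz)
  have e : (x * w⁻¹)⁻¹ * (x * z⁻¹) = w * z⁻¹ := by group
  rwa [e] at h1

lemma rcoset_image_bt (L : Subgroup G) (g : G) :
    rcoset L g = bt 1 g⁻¹ '' (L : Set G) := by
  ext x
  constructor
  · intro hx
    refine ⟨x * g⁻¹, mem_rcoset'.mp hx, ?_⟩
    rw [bt_apply]
    group
  · rintro ⟨l, hl, rfl⟩
    rw [bt_apply, mem_rcoset']
    have e : 1 * l * g⁻¹⁻¹ * g⁻¹ = l := by group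
    rwa [e]

lemma coset_image {K : Subgroup (Equiv.Perm G)} {L : Subgroup G}
    (hL : (L : Set G) = minBlock K) (hGK : starGroup (⊤ : Subgroup G) ≤ K)
    {k : Equiv.Perm G} (hk : k ∈ K) (z : G) :
    k '' rcoset L z = rcoset L (k z) := by
  have hB : IsBlock K (minBlock K) := isBlock_minBlock K
  rw [rcoset_image_bt L z, rcoset_image_bt L (k z), hL]
  have h1 : k '' (bt 1 z⁻¹ '' minBlock K) = (k * bt 1 z⁻¹) '' minBlock K := by
    rw [Set.image_image]
    rfl
  rw [h1]
  apply translates_overlap hB (K.mul_mem hk (bt_mem hGK 1 z⁻¹)) (bt_mem hGK 1 (k z)⁻¹)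
  refine ⟨k z, ⟨1, one_mem_minBlock K, ?_⟩, ⟨1, one_mem_minBlock K, ?_⟩⟩
  · rw [Equiv.Perm.mul_apply, bt_apply]
    norm_num
  · rw [bt_apply]
    group

lemma stabCosets_conj {K : Subgroup (Equiv.Perm G)} {L : Subgroup G}
    (hL : (L : Set G) = minBlock K) (hGK : starGroup (⊤ : Subgroup G) ≤ K)
    {k h : Equiv.Perm G} (hk : k ∈ K) (hh : h ∈ stabCosets K L) :
    k * h * k⁻¹ ∈ stabCosets K L := by
  obtain ⟨hhK, hhL⟩ := mem_stab.mp hh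
  refine mem_stab.mpr ⟨K.mul_mem (K.mul_mem hk hhK) (K.inv_mem hk), fun x => ?_⟩
  have h1 : h ((k⁻¹ : Equiv.Perm G) x) ∈ rcoset L ((k⁻¹ : Equiv.Perm G) x) :=
    mem_rcoset'.mpr (hhL _)
  have h2 : k (h ((k⁻¹ : Equiv.Perm G) x)) ∈ k '' rcoset L ((k⁻¹ : Equiv.Perm G) x) :=
    ⟨_, h1, rfl⟩
  rw [coset_image hL hGK hk] at h2
  have e : k ((k⁻¹ : Equiv.Perm G) x) = x := Equiv.Perm.apply_inv_self k x
  rw [e] at h2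
  have e2 : (k * h * k⁻¹) x = k (h ((k⁻¹ : Equiv.Perm G) x)) := by
    simp [Equiv.Perm.mul_apply]
  rw [e2]
  exact mem_rcoset'.mp h2

/-- Orbit of `y` under the pointwise stabilizer of `Z` inside `K_𝔏`. -/
def Orb (K : Subgroup (Equiv.Perm G)) (L : Subgroup G) (Z : Set G) (y : G) : Set G :=
  {x : G | ∃ h ∈ stabCosets K L, (∀ z ∈ Z, h z = z) ∧ h y = x}

lemma orb_self {K : Subgroup (Equiv.Perm G)} {L : Subgroup G} {Z : Set G} {y : G} :
    y ∈ Orb K L Z y :=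
  ⟨1, (stabCosets K L).one_mem, fun _ _ => rfl, rfl⟩

lemma perm_inv_fix {h : Equiv.Perm G} {z : G} (hz : h z = z) : (h⁻¹ : Equiv.Perm G) z = z := by
  nth_rewrite 1 [← hz]
  exact Equiv.Perm.inv_apply_self h z

lemma orb_symm {K : Subgroup (Equiv.Perm G)} {L : Subgroup G} {Z : Set G} {x y : G}
    (hx : x ∈ Orb K L Z y) : y ∈ Orb K L Z x := by
  obtain ⟨h, hs, hf, he⟩ := hx
  refine ⟨h⁻¹, (stabCosets K L).inv_mem hs, fun z hz => perm_inv_fix (hf z hz), ?_⟩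
  rw [← he]
  exact Equiv.Perm.inv_apply_self h y

lemma orb_congr {K : Subgroup (Equiv.Perm G)} {L : Subgroup G} {Z : Set G} {y y' : G}
    (hy' : y' ∈ Orb K L Z y) : Orb K L Z y' = Orb K L Z y := by
  obtain ⟨h₂, hs₂, hf₂, he₂⟩ := hy'
  ext x
  constructor
  · rintro ⟨h₁, hs₁, hf₁, he₁⟩
    refine ⟨h₁ * h₂, (stabCosets K L).mul_mem hs₁ hs₂, fun z hz => ?_, ?_⟩
    · rw [Equiv.Perm.mul_apply, hf₂ z hz, hf₁ z hz]
    · rw [Equiv.Perm.mul_apply, he₂, he₁]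
  · rintro ⟨h₁, hs₁, hf₁, he₁⟩
    refine ⟨h₁ * h₂⁻¹, (stabCosets K L).mul_mem hs₁ ((stabCosets K L).inv_mem hs₂),
      fun z hz => ?_, ?_⟩
    · rw [Equiv.Perm.mul_apply, perm_inv_fix (hf₂ z hz), hf₁ z hz]
    · have e : (h₂⁻¹ : Equiv.Perm G) y' = y := by
        rw [← he₂]; exact Equiv.Perm.inv_apply_self h₂ y
      rw [Equiv.Perm.mul_apply, e, he₁]

lemma orb_map {K : Subgroup (Equiv.Perm G)} {L : Subgroup G}
    (hL : (L : Set G) = minBlock K) (hGK : starGroup (⊤ : Subgroup G) ≤ K)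
    {Z : Set G} {x y : G} {k : Equiv.Perm G} (hk : k ∈ K)
    (hx : x ∈ Orb K L Z y) : k x ∈ Orb K L (k '' Z) (k y) := by
  obtain ⟨h, hs, hf, he⟩ := hx
  refine ⟨k * h * k⁻¹, stabCosets_conj hL hGK hk hs, ?_, ?_⟩
  · rintro z ⟨w, hw, rfl⟩
    have e : (k * h * k⁻¹) (k w) = k (h ((k⁻¹ : Equiv.Perm G) (k w))) := by
      simp [Equiv.Perm.mul_apply]
    rw [e, Equiv.Perm.inv_apply_self, hf w hw]
  · have e : (k * h * k⁻¹) (k y) = k (h ((k⁻¹ : Equiv.Perm G) (k y))) := by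
      simp [Equiv.Perm.mul_apply]
    rw [e, Equiv.Perm.inv_apply_self, he]

end Aux2

section Aux3

variable {G : Type*} [Group G] [Fintype G]

lemma S_le_L {K : Subgroup (Equiv.Perm G)} {L : Subgroup G}
    (hL : (L : Set G) = minBlock K) (hGK : starGroup (⊤ : Subgroup G) ≤ K)
    {S : Subgroup G} (hSnormal : S.Normal) (hSsimple : IsSimpleGroup S)
    (hScent : ∀ g : G, (∀ s ∈ S, g * s = s * g) → g = 1) :
    ∀ s ∈ S, s ∈ L := by
  intro s hs
  have : s ∈ (L : Set G) := by
    rw [hL, minBlock_eq]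
    exact Set.mem_sInter.2 fun B hB => fam_S hGK hSnormal hSsimple hScent hB s hs
  exact this

lemma L_conj {K : Subgroup (Equiv.Perm G)} {L : Subgroup G}
    (hL : (L : Set G) = minBlock K) (hGK : starGroup (⊤ : Subgroup G) ≤ K)
    (g : G) {x : G} (hx : x ∈ L) : g * x * g⁻¹ ∈ L := by
  have h1 : x ∈ (L : Set G) := hx
  rw [hL, minBlock_eq] at h1
  have h2 : g * x * g⁻¹ ∈ (L : Set G) := by
    rw [hL, minBlock_eq]
    exact Set.mem_sInter.2 fun B hB => fam_conj hGK hB (Set.mem_sInter.1 h1 B hB) g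
  exact h2

lemma lam_image {K : Subgroup (Equiv.Perm G)} {L : Subgroup G}
    (hL : (L : Set G) = minBlock K) (hGK : starGroup (⊤ : Subgroup G) ≤ K)
    {l : G} (hl : l ∈ L) (z : G) : bt l 1 '' rcoset L z = rcoset L z := by
  rw [coset_image hL hGK (bt_mem hGK l 1) z]
  apply rcoset_eq
  have e : bt l 1 z * z⁻¹ = l := by rw [bt_apply]; group
  rwa [e]

lemma rho_image {K : Subgroup (Equiv.Perm G)} {L : Subgroup G}
    (hL : (L : Set G) = minBlock K) (hGK : starGroup (⊤ : Subgroup G) ≤ K)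
    {l : G} (hl : l ∈ L) (z : G) : bt 1 l⁻¹ '' rcoset L z = rcoset L z := by
  rw [coset_image hL hGK (bt_mem hGK 1 l⁻¹) z]
  apply rcoset_eq
  have e : bt 1 l⁻¹ z * z⁻¹ = z * l * z⁻¹ := by rw [bt_apply]; group
  rw [e]
  exact L_conj hL hGK z hl

lemma lam_mem_orb {K : Subgroup (Equiv.Perm G)} {L : Subgroup G}
    (hL : (L : Set G) = minBlock K) (hGK : starGroup (⊤ : Subgroup G) ≤ K)
    {l : G} (hl : l ∈ L) {z x y : G} (hx : x ∈ Orb K L (rcoset L z) y) :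
    l * x ∈ Orb K L (rcoset L z) (l * y) := by
  have h1 := orb_map hL hGK (bt_mem hGK l 1) hx
  rw [lam_image hL hGK hl z] at h1
  have e1 : bt l 1 x = l * x := by rw [bt_apply]; group
  have e2 : bt l 1 y = l * y := by rw [bt_apply]; group
  rwa [e1, e2] at h1

lemma rho_mem_orb {K : Subgroup (Equiv.Perm G)} {L : Subgroup G}
    (hL : (L : Set G) = minBlock K) (hGK : starGroup (⊤ : Subgroup G) ≤ K)
    {l : G} (hl : l ∈ L) {z x y : G} (hx : x ∈ Orb K L (rcoset L z) y) :
    x * l ∈ Orb K L (rcoset L z) (y * l) := by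
  have h1 := orb_map hL hGK (bt_mem hGK 1 l⁻¹) hx
  rw [rho_image hL hGK hl z] at h1
  have e1 : bt 1 l⁻¹ x = x * l := by rw [bt_apply]; group
  have e2 : bt 1 l⁻¹ y = y * l := by rw [bt_apply]; group
  rwa [e1, e2] at h1

lemma sb_mem_orb {K : Subgroup (Equiv.Perm G)} {L : Subgroup G}
    (hL : (L : Set G) = minBlock K) (hGK : starGroup (⊤ : Subgroup G) ≤ K)
    {S : Subgroup G} (hSnormal : S.Normal) (hSsimple : IsSimpleGroup S)
    (hScent : ∀ g : G, (∀ s ∈ S, g * s = s * g) → g = 1)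
    {g' z b : G} (hb : b ∈ rcoset L g')
    (hw : ∃ h ∈ stabCosets K L, (∀ x ∈ rcoset L z, h x = x) ∧ ∃ y ∈ rcoset L g', h y ≠ y) :
    ∀ s ∈ S, s * b ∈ Orb K L (rcoset L z) b := by
  -- membership in L for elements translating b inside its orbit
  have hM_L : ∀ m : G, m * b ∈ Orb K L (rcoset L z) b → m ∈ L := by
    rintro m ⟨h, hs, _, he⟩
    have h1 : h b * b⁻¹ ∈ L := (mem_stab.mp hs).2 b
    rw [he] at h1
    have e : m * b * b⁻¹ = m := by group
    rwa [e] at h1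
  -- closure under multiplication
  have hmul : ∀ m₁ m₂ : G, m₁ * b ∈ Orb K L (rcoset L z) b → m₂ * b ∈ Orb K L (rcoset L z) b →
      m₁ * m₂ * b ∈ Orb K L (rcoset L z) b := by
    intro m₁ m₂ h₁ h₂
    have h3 := lam_mem_orb hL hGK (hM_L m₁ h₁) h₂
    rw [orb_congr h₁] at h3
    have e : m₁ * (m₂ * b) = m₁ * m₂ * b := by group
    rwa [e] at h3
  -- closure under inverse
  have hinv : ∀ m : G, m * b ∈ Orb K L (rcoset L z) b → m⁻¹ * b ∈ Orb K L (rcoset L z) b := by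
    intro m h₁
    have h2 : b ∈ Orb K L (rcoset L z) (m * b) := orb_symm h₁
    have h3 := lam_mem_orb hL hGK (L.inv_mem (hM_L m h₁)) h2
    have e : m⁻¹ * (m * b) = b := by group
    rwa [e] at h3
  -- closure under conjugation by L
  have hconj : ∀ u ∈ L, ∀ m : G, m * b ∈ Orb K L (rcoset L z) b →
      u * m * u⁻¹ * b ∈ Orb K L (rcoset L z) b := by
    intro u hu m h₁
    have hl : b⁻¹ * u * b ∈ L := by
      have := L_conj hL hGK b⁻¹ hu
      have e : b⁻¹ * u * b⁻¹⁻¹ = b⁻¹ * u * b := by group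
      rwa [e] at this
    have h2 := rho_mem_orb hL hGK (L.inv_mem hl) h₁
    have h3 := lam_mem_orb hL hGK hu h2
    have e1 : u * (m * b * (b⁻¹ * u * b)⁻¹) = u * m * u⁻¹ * b := by group
    have e2 : u * (b * (b⁻¹ * u * b)⁻¹) = b := by group
    rwa [e1, e2] at h3
  -- nontriviality
  have hnt : ∃ m : G, m * b ∈ Orb K L (rcoset L z) b ∧ m ≠ 1 := by
    obtain ⟨h, hhs, hfix, y, hy, hmove⟩ := hw
    have hv : y * b⁻¹ ∈ L := rcoset_div hy hb
    have h1 : h y ∈ Orb K L (rcoset L z) y := ⟨h, hhs, hfix, rfl⟩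
    have h2 := lam_mem_orb hL hGK (L.inv_mem hv) h1
    have e : (y * b⁻¹)⁻¹ * y = b := by group
    rw [e] at h2
    refine ⟨(y * b⁻¹)⁻¹ * h y * b⁻¹, ?_, ?_⟩
    · have e2 : (y * b⁻¹)⁻¹ * h y * b⁻¹ * b = (y * b⁻¹)⁻¹ * h y := by group
      rwa [e2]
    · intro hcon
      apply hmove
      have h3 := congrArg (fun w => (y * b⁻¹) * w * b) hcon
      have e3 : y * b⁻¹ * ((y * b⁻¹)⁻¹ * h y * b⁻¹) * b = h y := by group
      have e4 : y * b⁻¹ * 1 * b = y := by group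
      rw [e3, e4] at h3
      exact h3
  -- assemble a subgroup and apply simplicity
  let M : Subgroup G :=
    { carrier := {m : G | m * b ∈ Orb K L (rcoset L z) b}
      one_mem' := by
        have : (1 : G) * b = b := by group
        simp only [Set.mem_setOf_eq, this]
        exact orb_self
      mul_mem' := fun {m₁ m₂} h₁ h₂ => hmul m₁ m₂ h₁ h₂
      inv_mem' := fun {m} h₁ => hinv m h₁ }
  have hMnorm : ∀ s ∈ S, ∀ m ∈ M, s * m * s⁻¹ ∈ M := by
    intro s hs m hm
    exact hconj s (S_le_L hL hGK hSnormal hSsimple hScent s hs) m hm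
  have hMnt : ∃ m ∈ M, m ≠ 1 := by
    obtain ⟨m, h1, h2⟩ := hnt
    exact ⟨m, h1, h2⟩
  intro s hs
  exact simple_core hSnormal hSsimple hScent M hMnorm hMnt s hs

end Aux3

section Aux4

variable {G : Type*} [Group G] [Fintype G]

lemma main_trans {K : Subgroup (Equiv.Perm G)} {L : Subgroup G}
    (hL : (L : Set G) = minBlock K) (hGK : starGroup (⊤ : Subgroup G) ≤ K)
    {S : Subgroup G} (hSnormal : S.Normal) (hSsimple : IsSimpleGroup S)
    (hScent : ∀ g : G, (∀ s ∈ S, g * s = s * g) → g = 1)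
    (g g' : G) (f : Equiv.Perm G) (hf : f ∈ stabCosets K L)
    (hfix : ∀ x ∈ rcoset L g, f x = x) (y₀ : G) (hy₀ : y₀ ∈ rcoset L g') (hmv : f y₀ ≠ y₀)
    {b d : G} (hb : b ∈ rcoset L g') (hd : d ∈ rcoset L g') :
    ∃ h ∈ stabCosets K L, (∀ x ∈ rcoset L g, h x = x) ∧ h b = d := by
  classical
  set Zf : Set (Set G) := {Z : Set G | (∃ z, Z = rcoset L z) ∧
    ∃ h ∈ stabCosets K L, (∀ x ∈ Z, h x = x) ∧ ∃ y ∈ rcoset L g', h y ≠ y} with hZf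
  set D : Set G := {x : G | ∀ Z ∈ Zf, x ∈ Orb K L Z b} with hD
  have hXZ : rcoset L g ∈ Zf := ⟨⟨g, rfl⟩, f, hf, hfix, y₀, hy₀, hmv⟩
  have hDsub : D ⊆ rcoset L g' := by
    intro x hx
    obtain ⟨h, hs, _, he⟩ := hx _ hXZ
    have h1 : h b ∈ rcoset L b := mem_rcoset'.mpr ((mem_stab.mp hs).2 b)
    rw [he] at h1
    rwa [rcoset_eq hb] at h1
  have hbD : b ∈ D := fun Z _ => orb_self
  have hOrbD : ∀ x ∈ D, ∀ Z ∈ Zf, Orb K L Z x = Orb K L Z b :=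
    fun x hx Z hZ => orb_congr (hx Z hZ)
  have hDblock : IsBlock K D := by
    intro k hk
    rcases Set.eq_empty_or_nonempty (k '' D ∩ D) with hemp | hne
    · right; exact hemp
    · left
      obtain ⟨x₁, hx₁k, hx₁⟩ := hne
      obtain ⟨d₀, hd₀, rfl⟩ := hx₁k
      -- k fixes the coset of g' setwise
      have hX'k : k '' rcoset L g' = rcoset L g' := by
        have h1 : k d₀ ∈ rcoset L (k g') := by
          rw [← coset_image hL hGK hk g']
          exact ⟨d₀, hDsub hd₀, rfl⟩
        have h2 : k d₀ ∈ rcoset L g' := hDsub hx₁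
        rw [coset_image hL hGK hk g']
        exact rcoset_eq_of_mem_both h1 h2
      have hX'kinv : (k⁻¹ : Equiv.Perm G) '' rcoset L g' = rcoset L g' := by
        conv_lhs => rw [← hX'k]
        exact perm_inv_image k (rcoset L g')
      -- K-elements fixing the g'-coset map the family to itself
      have hmapZ : ∀ κ : Equiv.Perm G, κ ∈ K → κ '' rcoset L g' = rcoset L g' →
          ∀ Z ∈ Zf, κ '' Z ∈ Zf := by
        rintro κ hκ hκX' Z ⟨⟨z, rfl⟩, h, hhs, hhfix, y, hy, hymv⟩
        refine ⟨⟨κ z, coset_image hL hGK hκ z⟩, κ * h * κ⁻¹,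
          stabCosets_conj hL hGK hκ hhs, ?_, κ y, ?_, ?_⟩
        · rintro x ⟨w, hw, rfl⟩
          have e : (κ * h * κ⁻¹) (κ w) = κ (h ((κ⁻¹ : Equiv.Perm G) (κ w))) := by
            simp [Equiv.Perm.mul_apply]
          rw [e, Equiv.Perm.inv_apply_self, hhfix w hw]
        · rw [← hκX']
          exact ⟨y, hy, rfl⟩
        · have e : (κ * h * κ⁻¹) (κ y) = κ (h ((κ⁻¹ : Equiv.Perm G) (κ y))) := by
            simp [Equiv.Perm.mul_apply]
          rw [e, Equiv.Perm.inv_apply_self]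
          intro hcon
          exact hymv (κ.injective hcon)
      have hkZ := hmapZ k hk hX'k
      have hkinvZ := hmapZ (k⁻¹ : Equiv.Perm G) (K.inv_mem hk) hX'kinv
      ext x
      constructor
      · rintro ⟨x₀, hx₀D, rfl⟩
        intro W hW
        have hZW : (k⁻¹ : Equiv.Perm G) '' W ∈ Zf := hkinvZ W hW
        have h1 : x₀ ∈ Orb K L ((k⁻¹ : Equiv.Perm G) '' W) d₀ := by
          rw [hOrbD d₀ hd₀ _ hZW]
          exact hx₀D _ hZW
        have h2 := orb_map hL hGK hk h1
        rw [perm_image_inv k W] at h2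
        rw [← hOrbD (k d₀) hx₁ W hW]
        exact h2
      · intro hx
        refine ⟨(k⁻¹ : Equiv.Perm G) x, ?_, Equiv.Perm.apply_inv_self k x⟩
        intro Z hZ
        have hkZ' : k '' Z ∈ Zf := hkZ Z hZ
        have h1 : x ∈ Orb K L (k '' Z) (k d₀) := by
          rw [hOrbD (k d₀) hx₁ _ hkZ']
          exact hx _ hkZ'
        have h2 := orb_map hL hGK (K.inv_mem hk) h1
        rw [perm_inv_image k Z, Equiv.Perm.inv_apply_self] at h2
        rw [← hOrbD d₀ hd₀ Z hZ]
        exact h2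
  -- translate D so that it contains 1
  have hEblock : IsBlock K (bt 1 b '' D) := isBlock_image hDblock (bt_mem hGK 1 b)
  have hE1 : (1 : G) ∈ bt 1 b '' D := by
    refine ⟨b, hbD, ?_⟩
    rw [bt_apply]; group
  obtain ⟨s₀, hs₀ne⟩ := exists_ne (1 : S)
  have hs₀G : (s₀ : G) ∈ S := s₀.2
  have hs₀Gne : (s₀ : G) ≠ 1 := by
    intro hcon
    exact hs₀ne (by ext; exact hcon)
  have hsb : ∀ s ∈ S, s * b ∈ D := by
    intro s hs Z hZ
    obtain ⟨⟨z, rfl⟩, hw⟩ := hZ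
    exact sb_mem_orb hL hGK hSnormal hSsimple hScent hb hw s hs
  have hE2 : 2 ≤ (bt 1 b '' D).ncard := by
    have h1 : 1 < (bt 1 b '' D).ncard := by
      rw [Set.one_lt_ncard (Set.toFinite _)]
      refine ⟨1, hE1, (s₀ : G), ⟨(s₀ : G) * b, hsb _ hs₀G, ?_⟩, fun hcon => hs₀Gne hcon.symm⟩
      rw [bt_apply]; group
    omega
  have hLE : (L : Set G) ⊆ bt 1 b '' D := by
    rw [hL, minBlock_eq]
    exact Set.sInter_subset_of_mem ⟨hEblock, hE1, hE2⟩
  have hdD : d ∈ D := by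
    have h0 : d * b⁻¹ ∈ (L : Set G) := rcoset_div hd hb
    obtain ⟨x, hxD, he⟩ := hLE h0
    have e : x * b⁻¹ = d * b⁻¹ := by
      rw [bt_apply] at he
      rw [← he]; group
    have : x = d := mul_right_cancel e
    rwa [this] at hxD
  obtain ⟨h, hs, hfx, he⟩ := hdD _ hXZ
  exact ⟨h, hs, hfx, he⟩

end Aux4

/-- if two right cosets of the minimal block `L` are not equivalent, then
`K_𝔏` acts transitively on their Cartesian product. -/
theorem stabCosets_transitive_on_product (G : Type*) [Group G] [Fintype G]
    (S : Subgroup G) (hSnormal : S.Normal) (hSsimple : IsSimpleGroup S)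
    (hSnonabelian : ¬ ∀ a b : S, a * b = b * a)
    (hScent : ∀ g : G, (∀ s ∈ S, g * s = s * g) → g = 1)
    (K : Subgroup (Equiv.Perm G)) (hGK : starGroup (⊤ : Subgroup G) ≤ K)
    (L : Subgroup G) (hL : (L : Set G) = minBlock K) (g g' : G)
    (hne : ∃ f ∈ stabCosets K L,
      ((∀ x ∈ rcoset L g, (f : Equiv.Perm G) x = x) ∧
        ¬ (∀ x ∈ rcoset L g', (f : Equiv.Perm G) x = x)) ∨
      ((∀ x ∈ rcoset L g', (f : Equiv.Perm G) x = x) ∧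
        ¬ (∀ x ∈ rcoset L g, (f : Equiv.Perm G) x = x))) :
    ∀ a ∈ rcoset L g, ∀ c ∈ rcoset L g, ∀ b ∈ rcoset L g', ∀ d ∈ rcoset L g',
      ∃ k ∈ stabCosets K L, (k : Equiv.Perm G) a = c ∧ (k : Equiv.Perm G) b = d := by
  obtain ⟨f, hfK, hcase⟩ := hne
  intro a ha c hc b hb d hd
  rcases hcase with ⟨hfix, hmv⟩ | ⟨hfix, hmv⟩
  · push_neg at hmv
    obtain ⟨y₀, hy₀, hy₀mv⟩ := hmv
    have hca : c * a⁻¹ ∈ L := rcoset_div hc ha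
    have hlam : bt (c * a⁻¹) 1 ∈ stabCosets K L := by
      refine mem_stab.mpr ⟨bt_mem hGK _ _, fun x => ?_⟩
      have e : bt (c * a⁻¹) 1 x * x⁻¹ = c * a⁻¹ := by rw [bt_apply]; group
      rwa [e]
    have hb₁ : (c * a⁻¹) * b ∈ rcoset L g' := by
      have h1 := L.mul_mem hca (mem_rcoset'.mp hb)
      have e : c * a⁻¹ * (b * g'⁻¹) = c * a⁻¹ * b * g'⁻¹ := by group
      rw [e] at h1
      exact h1
    obtain ⟨h, hhs, hhfix, hhb⟩ := main_trans hL hGK hSnormal hSsimple hScent g g' f hfK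
      hfix y₀ hy₀ hy₀mv hb₁ hd
    refine ⟨h * bt (c * a⁻¹) 1, (stabCosets K L).mul_mem hhs hlam, ?_, ?_⟩
    · have e : bt (c * a⁻¹) 1 a = c := by rw [bt_apply]; group
      rw [Equiv.Perm.mul_apply, e]
      exact hhfix c hc
    · have e : bt (c * a⁻¹) 1 b = (c * a⁻¹) * b := by rw [bt_apply]; group
      rw [Equiv.Perm.mul_apply, e]
      exact hhb
  · push_neg at hmv
    obtain ⟨y₀, hy₀, hy₀mv⟩ := hmv
    have hdb : d * b⁻¹ ∈ L := rcoset_div hd hb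
    have hlam : bt (d * b⁻¹) 1 ∈ stabCosets K L := by
      refine mem_stab.mpr ⟨bt_mem hGK _ _, fun x => ?_⟩
      have e : bt (d * b⁻¹) 1 x * x⁻¹ = d * b⁻¹ := by rw [bt_apply]; group
      rwa [e]
    have ha₁ : (d * b⁻¹) * a ∈ rcoset L g := by
      have h1 := L.mul_mem hdb (mem_rcoset'.mp ha)
      have e : d * b⁻¹ * (a * g⁻¹) = d * b⁻¹ * a * g⁻¹ := by group
      rw [e] at h1
      exact h1
    obtain ⟨h, hhs, hhfix, hha⟩ := main_trans hL hGK hSnormal hSsimple hScent g' g f hfK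
      hfix y₀ hy₀ hy₀mv ha₁ hc
    refine ⟨h * bt (d * b⁻¹) 1, (stabCosets K L).mul_mem hhs hlam, ?_, ?_⟩
    · have e : bt (d * b⁻¹) 1 a = (d * b⁻¹) * a := by rw [bt_apply]; group
      rw [Equiv.Perm.mul_apply, e]
      exact hha
    · have e : bt (d * b⁻¹) 1 b = d := by rw [bt_apply]; group
      rw [Equiv.Perm.mul_apply, e]
      exact hhfix d hd
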